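/- For the Pauli-6 inverse channel M⁻¹(X) = 3X − tr(X)·I, the classical shadow ρ̂ = M⁻¹(|ψ_a⟩⟨ψ_a|) is an unbiased estimator: for any single-qubit density matrix ρ, Σ_a tr(ρ M_a) · M⁻¹(|ψ_a⟩⟨ψ_a|) = ρ, where M_a = (1/3)|ψ_a⟩⟨ψ_a| ranges over the six Pauli eigenstates. -/
import Mathlib


open Matrix Complex
open scoped ComplexOrder

noncomputable def ket0 : Fin 2 → ℂ := ![1, 0]
noncomputable def ket1 : Fin 2 → ℂ := ![0, 1]
noncomputable def ketP : Fin 2 → ℂ := ![(Real.sqrt 2)⁻¹, (Real.sqrt 2)⁻¹]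
noncomputable def ketM : Fin 2 → ℂ := ![(Real.sqrt 2)⁻¹, -(Real.sqrt 2)⁻¹]
noncomputable def ketL : Fin 2 → ℂ := ![(Real.sqrt 2)⁻¹, Complex.I * (Real.sqrt 2)⁻¹]
noncomputable def ketR : Fin 2 → ℂ := ![(Real.sqrt 2)⁻¹, -Complex.I * (Real.sqrt 2)⁻¹]

/-- The rank-one projector |ψ⟩⟨ψ|. -/
noncomputable def proj (ψ : Fin 2 → ℂ) : Matrix (Fin 2) (Fin 2) ℂ :=
  Matrix.vecMulVec ψ (star ψ)

noncomputable def sx : Matrix (Fin 2) (Fin 2) ℂ := !![0, 1; 1, 0]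
noncomputable def sy : Matrix (Fin 2) (Fin 2) ℂ := !![0, -Complex.I; Complex.I, 0]
noncomputable def sz : Matrix (Fin 2) (Fin 2) ℂ := !![1, 0; 0, -1]

/-- The six Pauli eigenstates. -/
noncomputable def ψ6 : Fin 6 → (Fin 2 → ℂ) := ![ket0, ket1, ketP, ketM, ketL, ketR]

/-- The Pauli-6 POVM elements. -/
noncomputable def M6 (a : Fin 6) : Matrix (Fin 2) (Fin 2) ℂ := (3 : ℂ)⁻¹ • proj (ψ6 a)

/-- The inverse of the Pauli-6 measurement channel: `M⁻¹(X) = 3X − tr(X)·I`. -/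
noncomputable def Minv (X : Matrix (Fin 2) (Fin 2) ℂ) : Matrix (Fin 2) (Fin 2) ℂ :=
  (3 : ℂ) • X - X.trace • 1


lemma hs2 : ((Real.sqrt 2 : ℝ) : ℂ) * ((Real.sqrt 2 : ℝ) : ℂ) = 2 := by
  rw [← Complex.ofReal_mul, Real.mul_self_sqrt (by norm_num)]; norm_num

lemma p0 : proj ket0 = !![1,0;0,0] := by
  ext i j; fin_cases i <;> fin_cases j <;>
    simp [proj, Matrix.vecMulVec_apply, ket0]

lemma p1 : proj ket1 = !![0,0;0,1] := by
  ext i j; fin_cases i <;> fin_cases j <;>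
    simp [proj, Matrix.vecMulVec_apply, ket1]

lemma pP : proj ketP = !![1/2,1/2;1/2,1/2] := by
  ext i j; fin_cases i <;> fin_cases j <;>
    simp [proj, Matrix.vecMulVec_apply, ketP] <;>
    rw [← Complex.ofReal_inv, ← Complex.ofReal_mul, ← Real.sqrt_inv,
      Real.mul_self_sqrt (by norm_num)] <;> norm_num

lemma pM : proj ketM = !![1/2,-(1/2);-(1/2),1/2] := by
  ext i j; fin_cases i <;> fin_cases j <;>
    simp [proj, Matrix.vecMulVec_apply, ketM] <;>
    rw [← Complex.ofReal_inv, ← Complex.ofReal_mul, ← Real.sqrt_inv,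
      Real.mul_self_sqrt (by norm_num)] <;> norm_num

lemma pL : proj ketL = !![1/2,-(Complex.I/2);Complex.I/2,1/2] := by
  have h : ((Real.sqrt 2 : ℝ) : ℂ)⁻¹ * ((Real.sqrt 2 : ℝ) : ℂ)⁻¹ = 1/2 := by
    rw [← mul_inv, hs2]; norm_num
  ext i j; fin_cases i <;> fin_cases j <;>
    simp [proj, Matrix.vecMulVec_apply, ketL, mul_comm, mul_assoc, mul_left_comm, h] <;>
    ring_nf <;> simp [Complex.I_sq, h, mul_comm] <;> norm_num <;> rw [mul_comm, h] <;> ring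

lemma pR : proj ketR = !![1/2,Complex.I/2;-(Complex.I/2),1/2] := by
  have h : ((Real.sqrt 2 : ℝ) : ℂ)⁻¹ * ((Real.sqrt 2 : ℝ) : ℂ)⁻¹ = 1/2 := by
    rw [← mul_inv, hs2]; norm_num
  ext i j; fin_cases i <;> fin_cases j <;>
    simp [proj, Matrix.vecMulVec_apply, ketR, mul_comm, mul_assoc, mul_left_comm, h] <;>
    ring_nf <;> simp [Complex.I_sq, h, mul_comm] <;> norm_num <;> rw [mul_comm, h] <;> ring

/-- The Pauli-6 classical shadow is an unbiased estimator: for any density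
matrix ρ, $\sum_a tr(ρ M_a)\, \mathcal M^{-1}(|ψ_a⟩⟨ψ_a|) = ρ$. -/
theorem pauli6_shadow_unbiased (ρ : Matrix (Fin 2) (Fin 2) ℂ)
    (hρ : ρ.PosSemidef) (htr : ρ.trace = 1) :
    ∑ a : Fin 6, (ρ * M6 a).trace • Minv (proj (ψ6 a)) = ρ := by

  have h10 : ρ 1 0 = (starRingEnd ℂ) (ρ 0 1) := by
    have := congrFun (congrFun hρ.1 1) 0
    simpa [Matrix.conjTranspose_apply] using this.symm
  have htr' : ρ 0 0 + ρ 1 1 = 1 := by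
    simpa [Matrix.trace, Fin.sum_univ_succ] using htr
  have e0 : ψ6 0 = ket0 := rfl
  have e1 : ψ6 1 = ket1 := rfl
  have e2 : ψ6 2 = ketP := rfl
  have e3 : ψ6 3 = ketM := rfl
  have e4 : ψ6 4 = ketL := rfl
  have e5 : ψ6 5 = ketR := rfl
  rw [Fin.sum_univ_six]
  simp only [M6, Minv, e0, e1, e2, e3, e4, e5, p0, p1, pP, pM, pL, pR]
  ext i j
  fin_cases i <;> fin_cases j <;>
    simp [Matrix.trace_fin_two, Matrix.mul_apply, Fin.sum_univ_two, Matrix.one_fin_two,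
      Matrix.smul_apply, Matrix.sub_apply] <;>
    ring_nf <;> simp [Complex.I_sq] <;> ring_nf
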